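/- Let m, n ≥ 1 be integers and let F be a field containing a primitive root of unity of order mn. Then for every field extension K/F, every continuous homomorphism from the absolute Galois group Γ_K to ℤ/mℤ lifts through the reduction map ℤ/mnℤ → ℤ/mℤ to a continuous homomorphism Γ_K → ℤ/mnℤ. -/

import Mathlib

set_option maxHeartbeats 1000000
set_option synthInstance.maxHeartbeats 100000

open Multiplicative Polynomial
open scoped IntermediateField Pointwise


/-- If `T` is a finite cyclic group and `f, f'' : Γ →* T` satisfy `ker f'' ≤ ker f`,
then `f` is a power of `f''`. -/
lemma aux_exists_zpow_eq {Γ T : Type*} [Group Γ] [CommGroup T] [Finite T] [IsCyclic T]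
    (f f'' : Γ →* T) (h : ∀ x, f'' x = 1 → f x = 1) : ∃ c : ℤ, ∀ x, f x = (f'' x) ^ c := by
  cases nonempty_fintype T
  classical
  obtain ⟨y, hy⟩ := IsCyclic.exists_generator (α := f''.range)
  obtain ⟨σ₀, hσ₀⟩ := y.2
  set D := orderOf (f'' σ₀) with hD
  have hDpos : 0 < D := orderOf_pos _
  have hfD : f σ₀ ^ D = 1 := by
    rw [← map_pow]
    exact h _ (by rw [map_pow, pow_orderOf_eq_one])
  have hmem : f σ₀ ∈ Subgroup.zpowers (f'' σ₀) := by
    have hsub : (Subgroup.zpowers (f'' σ₀) : Set T).toFinset ⊆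
        Finset.univ.filter (fun a : T => a ^ D = 1) := by
      intro z hz
      rw [Set.mem_toFinset] at hz
      obtain ⟨k, hk⟩ := Subgroup.mem_zpowers_iff.mp hz
      simp only [Finset.mem_filter, Finset.mem_univ, true_and]
      rw [← hk, ← zpow_natCast, ← zpow_mul, mul_comm, zpow_mul, zpow_natCast,
        pow_orderOf_eq_one, one_zpow]
    have hcard : ((Subgroup.zpowers (f'' σ₀) : Set T).toFinset).card = D := by
      rw [Set.toFinset_card]
      simpa using Fintype.card_zpowers (x := f'' σ₀)
    have hle := IsCyclic.card_pow_eq_one_le (α := T) hDpos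
    have heq := Finset.eq_of_subset_of_card_le hsub (by rw [hcard]; exact hle)
    have : f σ₀ ∈ (Subgroup.zpowers (f'' σ₀) : Set T).toFinset := by
      rw [heq]
      simp only [Finset.mem_filter, Finset.mem_univ, true_and]
      exact hfD
    rwa [Set.mem_toFinset] at this
  obtain ⟨c, hc⟩ := Subgroup.mem_zpowers_iff.mp hmem
  refine ⟨c, fun x => ?_⟩
  obtain ⟨k, hk⟩ := Subgroup.mem_zpowers_iff.mp (hy ⟨f'' x, ⟨x, rfl⟩⟩)
  have hk' : f'' σ₀ ^ k = f'' x := by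
    have := congrArg (Subtype.val) hk
    simpa [hσ₀, SubgroupClass.coe_zpow] using this
  have h2 : f'' (x * (σ₀ ^ k)⁻¹) = 1 := by
    rw [map_mul, map_inv, map_zpow, hk', mul_inv_cancel]
  have h3 := h _ h2
  rw [map_mul, map_inv, map_zpow] at h3
  have hfx : f x = f σ₀ ^ k := by
    have := mul_inv_eq_one.mp h3
    simpa using this
  rw [hfx, ← hc, ← hk', ← zpow_mul, ← zpow_mul, mul_comm]


/-- Discrete logarithm character attached to an element `β` whose Galois conjugates
differ from it by `N`-th roots of unity. -/
lemma aux_dlog (K' S' : Type*) [Field K'] [Field S'] [Algebra K' S'] (N : ℕ) [NeZero N]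
    (ζK : K') (hζ : IsPrimitiveRoot ζK N) (β : S') (hβ : β ≠ 0)
    (hroot : ∀ σ : S' ≃ₐ[K'] S', (σ β / β) ^ N = 1) :
    ∃ f' : (S' ≃ₐ[K'] S') →* Multiplicative (ZMod N),
      ∀ σ, σ β = algebraMap K' S' (ζK ^ (Multiplicative.toAdd (f' σ)).val) * β := by
  have hNpos : 0 < N := Nat.pos_of_ne_zero (NeZero.ne N)
  set ζS : S' := algebraMap K' S' ζK with hζSdef
  have hζS : IsPrimitiveRoot ζS N := hζ.map_of_injective (algebraMap K' S').injective
  set ζu : S'ˣ := (hζS.isUnit hNpos.ne').unit with hζudef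
  have hζu : IsPrimitiveRoot ζu N := hζS.isUnit_unit hNpos.ne'
  have hζuval : (ζu : S') = ζS := rfl
  -- every conjugate ratio is a power of ζS, in particular lies in the base field image
  have hfix : ∀ σ τ : S' ≃ₐ[K'] S', σ (τ β / β) = τ β / β := by
    intro σ τ
    obtain ⟨i, _, hi⟩ := hζS.eq_pow_of_pow_eq_one (hroot τ)
    rw [← hi, hζSdef, ← map_pow, AlgEquiv.commutes]
  have hmem : ∀ σ : S' ≃ₐ[K'] S',
      Units.mk0 (σ β / β) (div_ne_zero (by simp [hβ]) hβ) ∈ Subgroup.zpowers ζu := by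
    intro σ
    rw [hζu.zpowers_eq, mem_rootsOfUnity]
    ext
    push_cast
    exact hroot σ
  set e := hζu.zmodEquivZPowers with hedef
  set h1 : (S' ≃ₐ[K'] S') → Subgroup.zpowers ζu := fun σ =>
    ⟨Units.mk0 (σ β / β) (div_ne_zero (by simp [hβ]) hβ), hmem σ⟩ with h1def
  have h1mul : ∀ σ τ, h1 (σ * τ) = h1 σ * h1 τ := by
    intro σ τ
    ext
    push_cast [h1def]
    show (σ * τ) β / β = (σ β / β) * (τ β / β)
    have : (σ * τ) β = σ (τ β / β) * σ β := by
      rw [hfix σ τ]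
      show σ (τ β) = τ β / β * σ β
      calc σ (τ β) = σ ((τ β / β) * β) := by rw [div_mul_cancel₀ _ hβ]
        _ = σ (τ β / β) * σ β := by rw [map_mul]
        _ = τ β / β * σ β := by rw [hfix σ τ]
    rw [this, hfix σ τ]
    field_simp
  refine ⟨{ toFun := fun σ => ofAdd (e.symm (Additive.ofMul (h1 σ)))
            map_one' := ?_
            map_mul' := ?_ }, ?_⟩
  · show ofAdd (e.symm (Additive.ofMul (h1 1))) = 1
    have : h1 1 = 1 := by
      ext
      push_cast [h1def]
      show (1 : S' ≃ₐ[K'] S') β / β = 1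
      simp [div_self hβ]
    rw [this]
    simp
  · intro σ τ
    show ofAdd (e.symm (Additive.ofMul (h1 (σ * τ)))) =
      ofAdd (e.symm (Additive.ofMul (h1 σ))) * ofAdd (e.symm (Additive.ofMul (h1 τ)))
    rw [h1mul]
    simp [← ofAdd_add]
  · intro σ
    simp only [MonoidHom.coe_mk, OneHom.coe_mk, toAdd_ofAdd]
    set i : ZMod N := e.symm (Additive.ofMul (h1 σ)) with hidef
    have hei : e i = Additive.ofMul (h1 σ) := by rw [hidef, AddEquiv.apply_symm_apply]
    have hzu : ζu ^ i.val ∈ Subgroup.zpowers ζu :=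
      Subgroup.pow_mem _ (Subgroup.mem_zpowers ζu) i.val
    have hival : e ((i.val : ℕ) : ZMod N) =
        Additive.ofMul (⟨ζu ^ i.val, hzu⟩ : Subgroup.zpowers ζu) := by
      rw [hedef]
      exact hζu.zmodEquivZPowers_apply_coe_nat i.val
    rw [ZMod.natCast_rightInverse i] at hival
    have h2 : h1 σ = (⟨ζu ^ i.val, hzu⟩ : Subgroup.zpowers ζu) :=
      Additive.ofMul.injective (hei ▸ hival)
    have h3 : σ β / β = ζS ^ i.val := by
      have h4 : ((((h1 σ : Subgroup.zpowers ζu) : S'ˣ)) : S') = ((ζu ^ i.val : S'ˣ) : S') := by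
        rw [h2]
      simpa [h1def, hζuval] using h4
    rw [map_pow, ← hζSdef, ← h3, div_mul_cancel₀ _ hβ]


lemma aux_natCast_ne_zero {K : Type*} [Field K] {N : ℕ} (hN : 0 < N) {ζ : K}
    (h : IsPrimitiveRoot ζ N) : (N : K) ≠ 0 := by
  intro h0
  set p := ringChar K with hpdef
  haveI : CharP K p := ringChar.charP K
  have hp : p ∣ N := (CharP.cast_eq_zero_iff K p N).mp h0
  have hp0 : p ≠ 0 := by
    intro hp0
    rw [hp0] at hp
    exact hN.ne' (Nat.zero_dvd.mp hp)
  have hprime : p.Prime := CharP.char_prime_of_ne_zero K hp0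
  haveI : Fact p.Prime := ⟨hprime⟩
  obtain ⟨t, ht⟩ := hp
  have hξ : IsPrimitiveRoot (ζ ^ t) p := h.pow hN (by rw [ht, mul_comm])
  have hξp : (ζ ^ t) ^ p = 1 := hξ.pow_eq_one
  have : (ζ ^ t - 1) ^ p = 0 := by
    rw [sub_pow_char, hξp, one_pow, sub_self]
  have h1 : ζ ^ t = 1 := by
    have h2 := pow_eq_zero_iff (n := p) (by omega) |>.mp this
    exact sub_eq_zero.mp h2
  have : p = 1 := by
    have := hξ.eq_orderOf
    rw [h1] at this
    simpa using this
  exact hprime.one_lt.ne' this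

/-- Kummer-theoretic lifting: let `m, n ≥ 1` and let `F` be a field containing a primitive
root of unity of order `mn`.  Then for every field extension `K/F`, every continuous
homomorphism from the absolute Galois group `Γ_K` to `ℤ/mℤ` lifts, through the reduction
map `ℤ/mnℤ → ℤ/mℤ`, to a continuous homomorphism `Γ_K → ℤ/mnℤ`. -/
theorem lift_mod_m_to_mod_mn (m n : ℕ) (hm : 1 ≤ m) (hn : 1 ≤ n)
    (F K : Type) [Field F] [Field K] [Algebra F K]
    (ζ : F) (hζ : IsPrimitiveRoot ζ (m * n)) :
    ∀ f : ((separableClosure K (AlgebraicClosure K)) ≃ₐ[K]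
            (separableClosure K (AlgebraicClosure K))) →* Multiplicative (ZMod m),
      Continuous f →
      ∃ g : ((separableClosure K (AlgebraicClosure K)) ≃ₐ[K]
              (separableClosure K (AlgebraicClosure K))) →* Multiplicative (ZMod (m * n)),
        Continuous g ∧
        ∀ x, f x = Multiplicative.ofAdd
          ((ZMod.castHom (dvd_mul_right m n) (ZMod m)) (Multiplicative.toAdd (g x))) := by
  classical
  haveI : NeZero m := ⟨by omega⟩
  haveI : NeZero n := ⟨by omega⟩
  haveI : NeZero (m * n) := ⟨by positivity⟩
  set S := separableClosure K (AlgebraicClosure K) with hSdef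
  intro f hf
  by_cases htriv : ∀ x, f x = 1
  · refine ⟨1, continuous_const, fun x => ?_⟩
    simp [htriv x]
  push_neg at htriv
  obtain ⟨x₀, hx₀⟩ := htriv
  haveI : IsSepClosed ↥S := (separableClosure.isSepClosure K (AlgebraicClosure K)).sep_closed
  haveI : Normal K ↥S := inferInstance
  haveI : Algebra.IsSeparable K ↥S := inferInstance
  haveI : IsGalois K ↥S := inferInstance
  clear_value S
  set ζK : K := algebraMap F K ζ with hζKdef
  have hζK : IsPrimitiveRoot ζK (m * n) := hζ.map_of_injective (algebraMap F K).injective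
  have hζS : IsPrimitiveRoot (algebraMap K ↥S ζK) (m * n) :=
    hζK.map_of_injective (algebraMap K ↥S).injective
  -- Step 1: a finite-dimensional Galois subextension controlling f
  have hnhds : (⇑f) ⁻¹' {1} ∈ nhds (1 : ↥S ≃ₐ[K] ↥S) := by
    refine IsOpen.mem_nhds ?_ (by simp)
    exact (isOpen_discrete ({1} : Set (Multiplicative (ZMod m)))).preimage hf
  obtain ⟨E₀, hE₀fin, hE₀⟩ := (krullTopology_mem_nhds_one_iff K ↥S _).mp hnhds
  haveI := hE₀fin
  set E := IntermediateField.normalClosure K ↥E₀ ↥S with hEdef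
  haveI : FiniteDimensional K ↥E := normalClosure.is_finiteDimensional K ↥E₀ ↥S
  haveI : IsGalois K ↥E := ⟨⟩
  have hfixE : ∀ σ : ↥S ≃ₐ[K] ↥S, σ ∈ E.fixingSubgroup → f σ = 1 := by
    intro σ hσ
    have h1 : σ ∈ E₀.fixingSubgroup :=
      IntermediateField.fixingSubgroup_antitone (IntermediateField.le_normalClosure E₀) hσ
    exact hE₀ h1
  clear_value E
  set res := (AlgEquiv.restrictNormalHom ↥E : (↥S ≃ₐ[K] ↥S) →* (↥E ≃ₐ[K] ↥E)) with hresdef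
  have hsurj : Function.Surjective res := AlgEquiv.restrictNormalHom_surjective ↥S
  have hkerres : res.ker = E.fixingSubgroup := IntermediateField.restrictNormalHom_ker E
  have hresapp : ∀ (σ : ↥S ≃ₐ[K] ↥S) (y : ↥E), ((res σ) y : ↥S) = σ (y : ↥S) := fun σ y =>
    AlgEquiv.restrictNormalHom_apply (K₁ := ↥S) E σ y
  clear_value res
  have hcong : ∀ x y : ↥S ≃ₐ[K] ↥S, res x = res y → f x = f y := by
    intro x y hxy
    have h1 : y⁻¹ * x ∈ res.ker := by
      rw [MonoidHom.mem_ker, map_mul, map_inv, hxy, inv_mul_cancel]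
    have h2 : f (y⁻¹ * x) = 1 := hfixE _ (hkerres ▸ h1)
    calc f x = f (y * (y⁻¹ * x)) := by rw [mul_inv_cancel_left]
      _ = f y * f (y⁻¹ * x) := map_mul f _ _
      _ = f y := by rw [h2, mul_one]
  set sc := Function.surjInv hsurj with hscdef
  have hs : ∀ g, res (sc g) = g := fun g => Function.surjInv_eq hsurj g
  set χ : (↥E ≃ₐ[K] ↥E) →* Multiplicative (ZMod m) :=
    { toFun := fun g => f (sc g)
      map_one' := by
        show f (sc 1) = 1
        rw [hcong (sc 1) 1 (by rw [hs, map_one]), map_one]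
      map_mul' := by
        intro g h
        show f (sc (g * h)) = f (sc g) * f (sc h)
        rw [hcong (sc (g * h)) (sc g * sc h) (by rw [hs, map_mul, hs, hs]), map_mul] } with hχdef
  have hfactor : ∀ σ, χ (res σ) = f σ := fun σ => hcong _ _ (hs _)
  clear_value sc
  clear_value χ
  set N := χ.ker with hNdef
  haveI : N.Normal := χ.normal_ker
  have hmemN_iff : ∀ g : ↥E ≃ₐ[K] ↥E, g ∈ N ↔ χ g = 1 := fun g => χ.mem_ker
  clear_value N
  set L := IntermediateField.fixedField N with hLdef
  haveI : IsGalois K ↥L := IsGalois.of_fixedField_normal_subgroup N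
  haveI : FiniteDimensional K ↥L := inferInstance
  set d := Module.finrank K ↥L with hddef
  have hdcard : Nat.card (↥L ≃ₐ[K] ↥L) = d := by
    rw [IsGalois.card_aut_eq_finrank]
  have equ : ((↥E ≃ₐ[K] ↥E) ⧸ N) ≃* (↥L ≃ₐ[K] ↥L) := IsGalois.normalAutEquivQuotient N
  have equ2 : ((↥E ≃ₐ[K] ↥E) ⧸ N) ≃* χ.range :=
    (QuotientGroup.quotientMulEquivOfEq hNdef).trans (QuotientGroup.quotientKerEquivRange χ)
  haveI : IsCyclic (↥L ≃ₐ[K] ↥L) :=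
    isCyclic_of_surjective (equ.toMonoidHom.comp equ2.symm.toMonoidHom)
      (equ.surjective.comp equ2.symm.surjective)
  have hcardrange : Nat.card (↥L ≃ₐ[K] ↥L) = Nat.card χ.range :=
    Nat.card_congr (equ.symm.toEquiv.trans equ2.toEquiv)
  have hdm : d ∣ m := by
    have h2 : Nat.card χ.range ∣ Nat.card (Multiplicative (ZMod m)) :=
      Subgroup.card_subgroup_dvd_card _
    have h3 : Nat.card (Multiplicative (ZMod m)) = m := by
      rw [Nat.card_congr (Multiplicative.toAdd (α := ZMod m)), Nat.card_eq_fintype_card, ZMod.card]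
    rw [← hdcard, hcardrange]
    rwa [h3] at h2
  have hd0 : 0 < d := Module.finrank_pos
  have hdn1 : d ≠ 1 := by
    intro hd1
    apply hx₀
    rw [← hfactor]
    have h1 : χ.range = ⊥ := Subgroup.card_eq_one.mp (by rw [← hcardrange, hdcard, hd1])
    have h2 : χ (res x₀) ∈ χ.range := ⟨res x₀, rfl⟩
    rw [h1] at h2
    exact h2
  -- Step 2: Kummer generator
  have hprim : (primitiveRoots d K).Nonempty := by
    have hdvd : d ∣ m * n := hdm.trans (dvd_mul_right m n)
    have h1 : IsPrimitiveRoot (ζK ^ ((m * n) / d)) d :=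
      hζK.pow (by positivity) (Nat.div_mul_cancel hdvd).symm
    exact ⟨_, (mem_primitiveRoots hd0).mpr h1⟩
  obtain ⟨α, hαmem, hadj⟩ := exists_root_adjoin_eq_top_of_isCyclic K ↥L hprim
  obtain ⟨a, ha⟩ := hαmem
  have hα0 : α ≠ 0 := by
    intro h0
    rw [h0, IntermediateField.adjoin_zero] at hadj
    apply hdn1
    rw [hddef, ← IntermediateField.finrank_top', ← hadj, IntermediateField.finrank_bot]
  have ha0 : a ≠ 0 := by
    intro h0
    rw [h0, map_zero] at ha
    exact hα0 (pow_eq_zero_iff (by omega : d ≠ 0) |>.mp ha.symm)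
  set φ : ↥L →ₐ[K] ↥S := E.val.comp L.val with hφdef
  set αS : ↥S := φ α with hαSdef
  have hαS0 : αS ≠ 0 := fun h0 => hα0 (map_eq_zero_iff φ (RingHom.injective φ.toRingHom) |>.mp h0)
  have hαSd : αS ^ d = algebraMap K ↥S a := by
    rw [hαSdef, ← map_pow, ← ha, AlgHom.commutes]
  -- Step 3: an n-th root β of αS inside S
  have hmncast : ((m * n : ℕ) : ↥S) ≠ 0 := aux_natCast_ne_zero (by positivity) hζS
  have hncast : ((n : ℕ) : ↥S) ≠ 0 := by
    intro h0
    apply hmncast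
    push_cast
    push_cast at h0
    rw [h0, mul_zero]
  have hsep : (X ^ n - C αS).Separable := separable_X_pow_sub_C αS hncast hαS0
  have hdeg : (X ^ n - C αS).degree ≠ 0 := by
    rw [degree_X_pow_sub_C (by omega : 0 < n)]
    exact_mod_cast (by omega : n ≠ 0)
  obtain ⟨β, hβroot⟩ := IsSepClosed.exists_root _ hdeg hsep
  have hβn : β ^ n = αS := by
    have h1 : β ^ n - αS = 0 := by simpa using hβroot
    exact sub_eq_zero.mp h1
  have hβ0 : β ≠ 0 := by
    intro h0
    apply hαS0
    rw [← hβn, h0, zero_pow (by omega : n ≠ 0)]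
  have hβdn : β ^ (d * n) = algebraMap K ↥S a := by
    rw [mul_comm d n, pow_mul, hβn, hαSd]
  have hroot : ∀ σ : ↥S ≃ₐ[K] ↥S, (σ β / β) ^ (m * n) = 1 := by
    intro σ
    have h1 : (σ β / β) ^ (d * n) = 1 := by
      rw [div_pow, ← map_pow, hβdn, AlgEquiv.commutes, div_self]
      rw [← hβdn]
      exact pow_ne_zero _ hβ0
    obtain ⟨t, ht⟩ : (d * n) ∣ (m * n) := Nat.mul_dvd_mul_right hdm n
    rw [ht, pow_mul, h1, one_pow]
  obtain ⟨f', hf'char⟩ := aux_dlog K ↥S (m * n) ζK hζK β hβ0 hroot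
  -- Step 4: continuity of f'
  have hβint : IsIntegral K β :=
    IsIntegral.of_pow (by positivity : 0 < d * n) (hβdn ▸ isIntegral_algebraMap)
  haveI : FiniteDimensional K ↥K⟮β⟯ := IntermediateField.adjoin.finiteDimensional hβint
  have hone : ∀ τ : ↥S ≃ₐ[K] ↥S, τ β = β → f' τ = 1 := by
    intro τ hτ
    have h1 := hf'char τ
    rw [hτ] at h1
    have h2 : algebraMap K ↥S (ζK ^ (toAdd (f' τ)).val) = 1 := by
      have := mul_right_cancel₀ hβ0 (h1.symm.trans (one_mul β).symm)
      exact this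
    have h3 : ζK ^ (toAdd (f' τ)).val = 1 :=
      (algebraMap K ↥S).injective (by rw [h2, map_one])
    have h4 : (m * n) ∣ (toAdd (f' τ)).val := (hζK.pow_eq_one_iff_dvd _).mp h3
    have h5 : (toAdd (f' τ)).val = 0 :=
      Nat.eq_zero_of_dvd_of_lt h4 (ZMod.val_lt _)
    have h6 : toAdd (f' τ) = 0 := by
      have h7 := ZMod.natCast_rightInverse (n := m * n) (toAdd (f' τ))
      rw [← h7, h5, Nat.cast_zero]
    calc f' τ = ofAdd (toAdd (f' τ)) := rfl
      _ = ofAdd 0 := by rw [h6]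
      _ = 1 := rfl
  have hcontf' : Continuous f' := by
    rw [continuous_iff_continuousAt]
    intro x
    unfold ContinuousAt
    have hnd : nhds (f' x) = pure (f' x) := congrFun (nhds_discrete _) _
    rw [hnd, Filter.tendsto_pure]
    have hopen : IsOpen ((K⟮β⟯.fixingSubgroup : Set (↥S ≃ₐ[K] ↥S))) :=
      IntermediateField.fixingSubgroup_isOpen _
    have hcoset : (x • (K⟮β⟯.fixingSubgroup : Set (↥S ≃ₐ[K] ↥S))) ∈ nhds x :=
      (hopen.leftCoset x).mem_nhds ⟨1, K⟮β⟯.fixingSubgroup.one_mem, mul_one x⟩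
    filter_upwards [hcoset] with y hy
    obtain ⟨τ, hτ, rfl⟩ := hy
    show f' (x * τ) = f' x
    rw [map_mul, hone τ ?_, mul_one]
    exact ((IntermediateField.mem_fixingSubgroup_iff _ _).mp hτ) β
      (IntermediateField.mem_adjoin_simple_self K β)
  -- Step 5: the reduction of f' and its kernel
  obtain ⟨f'', hf''eq⟩ : ∃ f'' : (↥S ≃ₐ[K] ↥S) →* Multiplicative (ZMod m),
      ∀ σ, f'' σ = ofAdd ((ZMod.castHom (dvd_mul_right m n) (ZMod m)) (toAdd (f' σ))) :=
    ⟨(AddMonoidHom.toMultiplicative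
        ((ZMod.castHom (dvd_mul_right m n) (ZMod m)).toAddMonoidHom)).comp f', fun _ => rfl⟩
  have hIa : ∀ σ : ↥S ≃ₐ[K] ↥S, f'' σ = 1 → σ αS = αS := by
    intro σ hσ
    set j := (toAdd (f' σ)).val with hjdef
    have hmj : m ∣ j := by
      have h1 : (ZMod.castHom (dvd_mul_right m n) (ZMod m)) (toAdd (f' σ)) = 0 := by
        have h0 := congrArg toAdd ((hf''eq σ).symm.trans hσ)
        simpa using h0
      have h2 : toAdd (f' σ) = ((j : ℕ) : ZMod (m * n)) :=
        (ZMod.natCast_rightInverse (n := m * n) (toAdd (f' σ))).symm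
      rw [h2, map_natCast] at h1
      exact (ZMod.natCast_eq_zero_iff j m).mp h1
    have h3 : σ αS = algebraMap K ↥S (ζK ^ j) ^ n * αS := by
      rw [← hβn, map_pow, hf'char σ, mul_pow, hβn, ← hjdef]
    have h4 : ζK ^ (j * n) = 1 :=
      (hζK.pow_eq_one_iff_dvd _).mpr (Nat.mul_dvd_mul_right hmj n)
    rw [h3, ← map_pow, ← pow_mul, h4, map_one, one_mul]
  have hIb : ∀ σ : ↥S ≃ₐ[K] ↥S, σ αS = αS → f σ = 1 := by
    intro σ hσ
    rw [← hfactor]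
    have hmemN : res σ ∈ N := by
      have hKrull : (IntermediateField.fixedField N).fixingSubgroup = N :=
        IntermediateField.fixingSubgroup_fixedField N
      rw [← hLdef] at hKrull
      rw [← hKrull, IntermediateField.mem_fixingSubgroup_iff]
      intro x hx
      have htop : Algebra.adjoin K ({α} : Set ↥L) = ⊤ := by
        rw [← IntermediateField.adjoin_simple_toSubalgebra_of_isAlgebraic (IsIntegral.of_finite K α).isAlgebraic,
          hadj, IntermediateField.top_toSubalgebra]
      have hρα : (res σ) (L.val α) = L.val α := by
        apply Subtype.ext
        exact (hresapp σ (L.val α)).trans hσ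
      have heq : Algebra.adjoin K ({α} : Set ↥L) ≤
          AlgHom.equalizer ((res σ).toAlgHom.comp L.val) L.val := by
        apply Algebra.adjoin_le
        intro y hy
        rw [Set.mem_singleton_iff] at hy
        subst hy
        exact hρα
      rw [htop] at heq
      have hall : (⟨x, hx⟩ : ↥L) ∈ AlgHom.equalizer ((res σ).toAlgHom.comp L.val) L.val :=
        heq Algebra.mem_top
      exact hall
    exact (hmemN_iff _).mp hmemN
  -- Step 6: conclude by the cyclic-group comparison lemma
  have hkk : ∀ x, f'' x = 1 → f x = 1 := fun x hx => hIb x (hIa x hx)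
  obtain ⟨c, hc⟩ := aux_exists_zpow_eq f f'' hkk
  refine ⟨(zpowGroupHom c).comp f', ?_, fun x => ?_⟩
  · have hcomp : ⇑((zpowGroupHom c).comp f') = (fun t => t ^ c) ∘ ⇑f' := rfl
    rw [hcomp]
    exact Continuous.comp continuous_of_discreteTopology hcontf'
  rw [hc x, hf''eq x]
  show _ = ofAdd ((ZMod.castHom (dvd_mul_right m n) (ZMod m)) (toAdd ((f' x) ^ c)))
  rw [toAdd_zpow]
  have hzs : (ZMod.castHom (dvd_mul_right m n) (ZMod m)) (c • toAdd (f' x)) =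
      c • (ZMod.castHom (dvd_mul_right m n) (ZMod m)) (toAdd (f' x)) := by
    exact map_zsmul (ZMod.castHom (dvd_mul_right m n) (ZMod m)).toAddMonoidHom c _
  rw [hzs, ofAdd_zsmul]
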